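/- arXiv:2303.10216 — 2 statements merged into one kernel-verified Lean document; each statement's English description precedes it below -/
import Mathlib

section
/- Let f belong to (an equivalence class in) L^1(P̃_X) and let h be a linear game value whose coefficients w_i(S,N) are nonnegative and satisfy Σ_{S⊆N∖{i}} w_i(S,N) = 1. Then for P_X-almost every x* ∈ ℝ^n and every i ∈ N, the marginal game value admits the integral representation h_i[N, v^{ME}(·; x*, X, f)] = ∫ Δ_i(S, x; x*, f) [P_i^{(h)} ⊗ P_X](dS, dx), where Δ_i(S,x; x*,f) := f(x*_{S∪{i}}, x_{-(S∪{i})}) − f(x*_S, x_{-S}). -/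
open MeasureTheory ProbabilityTheory ENNReal Filter Finset

noncomputable section

/-- Discrete σ-algebra on the (finite) space of coalitions. -/
instance {k : ℕ} : MeasurableSpace (Finset (Fin k)) := ⊤

/-- `merge n S y x` is the vector in `ℝ^n` agreeing with `y` on `S` and with `x` on `N∖S`,
i.e. the vector `(y_S, x_{-S})`. -/
def merge (n : ℕ) (S : Finset (Fin n)) (y x : Fin n → ℝ) : Fin n → ℝ :=
  fun i => if i ∈ S then y i else x i

/-- The product measure `P_{X_S} ⊗ P_{X_{-S}}` viewed as a measure on `ℝ^n`
(obtained by merging two independent copies along `S`). -/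
def prodPart (n : ℕ) (P : Measure (Fin n → ℝ)) (S : Finset (Fin n)) :
    Measure (Fin n → ℝ) :=
  (P.prod P).map (fun q => merge n S q.1 q.2)

/-- The mixture measure `P̃_X = 2^{-n} ∑_{S ⊆ N} P_{X_S} ⊗ P_{X_{-S}}` on `ℝ^n`. -/
def tildeP (n : ℕ) (P : Measure (Fin n → ℝ)) : Measure (Fin n → ℝ) :=
  ((2 : ℝ≥0∞) ^ n)⁻¹ • ∑ S : Finset (Fin n), prodPart n P S

/-- The marginal game `v^{ME}(S; x*, X, f) = E[f(x*_S, X_{-S})]`. -/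
def vME (n : ℕ) (P : Measure (Fin n → ℝ)) (f : (Fin n → ℝ) → ℝ)
    (xs : Fin n → ℝ) (S : Finset (Fin n)) : ℝ :=
  ∫ x, f (merge n S xs x) ∂P

/-- A linear game value `h_i[N,v] = ∑_{S ⊆ N∖{i}} w(S) (v(S∪{i}) - v(S))`. -/
def gameValue (n : ℕ) (w : Finset (Fin n) → ℝ) (i : Fin n)
    (v : Finset (Fin n) → ℝ) : ℝ :=
  ∑ S ∈ (univ.erase i).powerset, w S * (v (insert i S) - v S)

/-- The discrete measure on subsets of `D` assigning mass `w T` to each `T ⊆ D`.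
For `D = N∖{i}` and nonnegative weights summing to one this is `P_i^{(h)}`. -/
def subsetMeasure (k : ℕ) (D : Finset (Fin k)) (w : Finset (Fin k) → ℝ) :
    Measure (Finset (Fin k)) :=
  ∑ T ∈ D.powerset, (ENNReal.ofReal (w T)) • Measure.dirac T

/-- `Δ_i(S, x; x*, f) = f(x*_{S∪{i}}, x_{-(S∪{i})}) - f(x*_S, x_{-S})`. -/
def deltaFun (n : ℕ) (f : (Fin n → ℝ) → ℝ) (i : Fin n) (xs : Fin n → ℝ) :
    Finset (Fin n) × (Fin n → ℝ) → ℝ :=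
  fun q => f (merge n (insert i q.1) xs q.2) - f (merge n q.1 xs q.2)

instance {k : ℕ} : MeasurableSingletonClass (Finset (Fin k)) :=
  ⟨fun _ => MeasurableSpace.measurableSet_top⟩

lemma merge_measurable (n : ℕ) (S : Finset (Fin n)) :
    Measurable (fun q : (Fin n → ℝ) × (Fin n → ℝ) => merge n S q.1 q.2) := by
  apply measurable_pi_lambda
  intro i
  by_cases h : i ∈ S <;> simp only [merge, h, if_true, if_false]
  · exact (measurable_pi_apply i).comp measurable_fst
  · exact (measurable_pi_apply i).comp measurable_snd

lemma measureSmulProd {α β : Type*} [MeasurableSpace α] [MeasurableSpace β]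
    (c : ℝ≥0∞) (μ : Measure α) [SFinite μ] (ν : Measure β) [SFinite ν] :
    (c • μ).prod ν = c • μ.prod ν := by
  ext s hs
  rw [Measure.prod_apply hs, Measure.smul_apply, Measure.prod_apply hs,
    lintegral_smul_measure, smul_eq_mul]

lemma finsum_prod {α β ι : Type*} [MeasurableSpace α] [MeasurableSpace β]
    (s : Finset ι) (μ : ι → Measure α) [∀ i, SFinite (μ i)] (ν : Measure β) [SFinite ν] :
    (∑ i ∈ s, μ i).prod ν = ∑ i ∈ s, (μ i).prod ν := by
  classical
  induction s using Finset.cons_induction with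
  | empty => simp [Measure.zero_prod]
  | cons a s ha ih =>
      have : SFinite (∑ i ∈ s, μ i) := by
        clear ih ha
        induction s using Finset.cons_induction with
        | empty => simpa using inferInstanceAs (SFinite (0 : Measure α))
        | cons b t hb iht => rw [Finset.sum_cons]; infer_instance
      rw [Finset.sum_cons, Finset.sum_cons, Measure.add_prod, ih]

/-- Integral representation of marginal game values.
Let `f ∈ L¹(P̃_X)` and let the coefficients `w_i(S,N)` be nonnegative and sum to one
over `S ⊆ N∖{i}`. Then for `P_X`-almost every `x*` and every `i ∈ N`,
`h_i[N, v^{ME}(·; x*, X, f)] = ∫ Δ_i(S, x; x*, f) [P_i^{(h)} ⊗ P_X](dS, dx)`. -/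
theorem stmt6 (n : ℕ) (P : Measure (Fin n → ℝ)) [IsProbabilityMeasure P]
    (f : (Fin n → ℝ) → ℝ) (hf : MemLp f 1 (tildeP n P))
    (w : Fin n → Finset (Fin n) → ℝ)
    (hw0 : ∀ i : Fin n, ∀ S ∈ (univ.erase i).powerset, 0 ≤ w i S)
    (hw1 : ∀ i : Fin n, ∑ S ∈ (univ.erase i).powerset, w i S = 1) :
    ∀ᵐ xs ∂P, ∀ i : Fin n,
      gameValue n (w i) i (vME n P f xs) =
        ∫ q, deltaFun n f i xs q
          ∂((subsetMeasure n (univ.erase i) (w i)).prod P) := by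
  classical
  have hint : Integrable f (tildeP n P) := memLp_one_iff_integrable.mp hf
  have h2n : ((2 : ℝ≥0∞) ^ n) ≠ 0 := by
    exact pow_ne_zero _ two_ne_zero
  have h2n' : ((2 : ℝ≥0∞) ^ n) ≠ ∞ := ENNReal.pow_ne_top ENNReal.ofNat_ne_top
  have hsum : Integrable f (∑ S : Finset (Fin n), prodPart n P S) := by
    have h := hint.smul_measure h2n'
    rwa [tildeP, smul_smul, ENNReal.mul_inv_cancel h2n h2n', one_smul] at h
  have key : ∀ S : Finset (Fin n),
      Integrable (fun q : (Fin n → ℝ) × (Fin n → ℝ) => f (merge n S q.1 q.2)) (P.prod P) := by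
    intro S
    have hle : prodPart n P S ≤ ∑ T : Finset (Fin n), prodPart n P T := by
      refine Measure.le_iff.mpr fun s hs => ?_
      rw [Measure.finset_sum_apply]
      exact Finset.single_le_sum (f := fun T => prodPart n P T s) (fun _ _ => zero_le)
        (Finset.mem_univ S)
    have h1 : Integrable f (prodPart n P S) := hsum.mono_measure hle
    have h1' : Integrable f ((P.prod P).map (fun q => merge n S q.1 q.2)) := h1
    exact (integrable_map_measure h1'.aestronglyMeasurable
      (merge_measurable n S).aemeasurable).mp h1'
  have hae : ∀ᵐ xs ∂P, ∀ S : Finset (Fin n), Integrable (fun x => f (merge n S xs x)) P := by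
    rw [ae_all_iff]
    exact fun S => (key S).prod_right_ae
  filter_upwards [hae] with xs hxs i
  have hmeas : (subsetMeasure n (univ.erase i) (w i)).prod P
      = ∑ T ∈ (univ.erase i).powerset,
          (ENNReal.ofReal (w i T)) • (P.map (Prod.mk T)) := by
    rw [subsetMeasure, finsum_prod]
    exact Finset.sum_congr rfl fun T _ => by rw [measureSmulProd, Measure.dirac_prod]
  have hintT : ∀ T : Finset (Fin n),
      Integrable (fun x => deltaFun n f i xs (T, x)) P := by
    intro T
    exact ((hxs (insert i T)).sub (hxs T))
  have hembed : ∀ T : Finset (Fin n),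
      MeasurableEmbedding (Prod.mk T : (Fin n → ℝ) → Finset (Fin n) × (Fin n → ℝ)) :=
    fun T => measurableEmbedding_prodMk_left T
  have hintmap : ∀ T ∈ (univ.erase i).powerset,
      Integrable (deltaFun n f i xs) ((ENNReal.ofReal (w i T)) • (P.map (Prod.mk T))) := by
    intro T _
    refine Integrable.smul_measure ?_ ENNReal.ofReal_ne_top
    exact ((hembed T).integrable_map_iff).mpr (hintT T)
  rw [hmeas, integral_finset_sum_measure hintmap]
  unfold gameValue
  refine Finset.sum_congr rfl fun T hT => ?_
  rw [integral_smul_measure, (hembed T).integral_map]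
  rw [ENNReal.toReal_ofReal (hw0 i T hT), smul_eq_mul]
  congr 1
  have := integral_sub (hxs (insert i T)) (hxs T)
  simp only [vME, deltaFun]
  rw [← this]
end
end

section
/- Let f belong to (an equivalence class in) L^1(P̃_X), let h be a linear game value whose coefficients w_i(S,N) are nonnegative and sum to one over S ⊆ N∖{i}, and let (𝒮^(k), X^(k)), k = 1,…,K, be independent random samples from the product measure P_i^{(h)} ⊗ P_X. Then for P_X-almost every x*, the Monte Carlo estimator K^{-1} Σ_{k=1}^K Δ_i(𝒮^(k), X^(k); x*, f) is an unbiased estimator of h_i[N, v^{ME}(·; x*, X, f)], and the error E_K := K^{-1} Σ_{k=1}^K Δ_i(𝒮^(k), X^(k); x*, f) − h_i[N, v^{ME}(·; x*, X, f)] converges to 0 in probability as K → ∞. If moreover f ∈ L^2(P̃_X), then ‖E_K‖²_{L²(ℙ)} ≤ (4/K) · (max_{S⊆N∖{i}} w_i(S,N)) · ν_{x*}^{(2)}(f), so E_K → 0 in L²(ℙ) at rate O(K^{-1/2}). -/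
open MeasureTheory ProbabilityTheory ENNReal Filter Finset

noncomputable section

-- Auxiliary lemmas
instance inst_s7 {k : ℕ} : MeasurableSingletonClass (Finset (Fin k)) := ⟨fun _ => trivial⟩

lemma measurable_mergePair (n : ℕ) (S : Finset (Fin n)) :
    Measurable fun q : (Fin n → ℝ) × (Fin n → ℝ) => merge n S q.1 q.2 := by
  apply measurable_pi_lambda
  intro j
  unfold merge
  by_cases hj : j ∈ S <;> simp only [hj, if_true, if_false]
  · exact (measurable_pi_apply j).comp measurable_fst
  · exact (measurable_pi_apply j).comp measurable_snd

lemma ae_map_prod_mk {k : ℕ} {β : Type*} [MeasurableSpace β] (T : Finset (Fin k))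
    (P : Measure β) {p : Finset (Fin k) × β → Prop} (h : ∀ᵐ x ∂P, p (T, x)) :
    ∀ᵐ q ∂(P.map (Prod.mk T)), p q := by
  rw [ae_iff] at h ⊢
  obtain ⟨N, hNsub, hNmeas, hN0⟩ := exists_measurable_superset_of_null h
  have hsub : {q : Finset (Fin k) × β | ¬p q} ⊆
      ({T} ×ˢ N) ∪ (({T} : Set (Finset (Fin k)))ᶜ ×ˢ Set.univ) := by
    rintro ⟨S, x⟩ hq
    by_cases hS : S = T
    · subst hS
      exact Or.inl ⟨rfl, hNsub hq⟩
    · exact Or.inr ⟨hS, trivial⟩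
  refine measure_mono_null hsub ?_
  have hmeas : MeasurableSet (({T} ×ˢ N) ∪ (({T} : Set (Finset (Fin k)))ᶜ ×ˢ Set.univ)) :=
    ((MeasurableSet.singleton T).prod hNmeas).union ((MeasurableSet.singleton T).compl.prod .univ)
  rw [Measure.map_apply measurable_prodMk_left hmeas]
  have : Prod.mk T ⁻¹' (({T} ×ˢ N) ∪ (({T} : Set (Finset (Fin k)))ᶜ ×ˢ Set.univ)) = N := by
    ext x; simp
  rw [this, hN0]

lemma ae_finsetSum {ι α : Type*} [MeasurableSpace α] (s : Finset ι) (μ : ι → Measure α)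
    {p : α → Prop} (h : ∀ i ∈ s, ∀ᵐ x ∂(μ i), p x) : ∀ᵐ x ∂(∑ i ∈ s, μ i), p x := by
  classical
  induction s using Finset.induction_on with
  | empty => simp
  | insert a t hns ih =>
    rw [Finset.sum_insert hns, ae_add_measure_iff]
    exact ⟨h a (Finset.mem_insert_self a t), ih fun i hi => h i (Finset.mem_insert_of_mem hi)⟩

lemma subsetMeasure_prod (k : ℕ) (D : Finset (Fin k)) (w : Finset (Fin k) → ℝ)
    (P : Measure (Fin k → ℝ)) [IsProbabilityMeasure P] :
    (subsetMeasure k D w).prod P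
      = ∑ T ∈ D.powerset, ENNReal.ofReal (w T) • P.map (Prod.mk T) := by
  ext s hs
  rw [Measure.prod_apply hs, Measure.finset_sum_apply]
  unfold subsetMeasure
  rw [lintegral_finset_sum_measure]
  refine Finset.sum_congr rfl fun T _ => ?_
  rw [lintegral_smul_measure, lintegral_dirac, Measure.smul_apply,
    Measure.map_apply measurable_prodMk_left hs, smul_eq_mul]

lemma slice_int (n : ℕ) (P : Measure (Fin n → ℝ)) [IsProbabilityMeasure P]
    (f : (Fin n → ℝ) → ℝ) (hf : MemLp f 1 (tildeP n P)) (S : Finset (Fin n)) :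
    ∀ᵐ xs ∂P, Integrable (fun x => f (merge n S xs x)) P := by
  have hsum : MemLp f 1 (∑ T : Finset (Fin n), prodPart n P T) := by
    have h2n : ((2 : ℝ≥0∞) ^ n) ≠ ∞ := ENNReal.pow_ne_top ENNReal.ofNat_ne_top
    have := hf.smul_measure (c := (2 : ℝ≥0∞) ^ n) h2n
    rwa [tildeP, smul_smul, ENNReal.mul_inv_cancel (by positivity) h2n, one_smul] at this
  have hle : prodPart n P S ≤ ∑ T : Finset (Fin n), prodPart n P T := by
    rw [← Finset.add_sum_erase _ _ (Finset.mem_univ S)]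
    exact Measure.le_add_right le_rfl
  have hS : MemLp f 1 (prodPart n P S) := hsum.mono_measure hle
  have hint : Integrable f (prodPart n P S) := memLp_one_iff_integrable.mp hS
  rw [prodPart] at hint
  have hcomp : Integrable (fun q : (Fin n → ℝ) × (Fin n → ℝ) => f (merge n S q.1 q.2))
      (P.prod P) :=
    (integrable_map_measure hint.aestronglyMeasurable
      (measurable_mergePair n S).aemeasurable).mp hint
  exact hcomp.prod_right_ae

lemma slice_sq_int (n : ℕ) (P : Measure (Fin n → ℝ)) [IsProbabilityMeasure P]
    (f : (Fin n → ℝ) → ℝ) (hf : MemLp f 2 (tildeP n P)) (S : Finset (Fin n)) :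
    ∀ᵐ xs ∂P, Integrable (fun x => (f (merge n S xs x)) ^ 2) P := by
  have hsum : MemLp f 2 (∑ T : Finset (Fin n), prodPart n P T) := by
    have h2n : ((2 : ℝ≥0∞) ^ n) ≠ ∞ := ENNReal.pow_ne_top ENNReal.ofNat_ne_top
    have := hf.smul_measure (c := (2 : ℝ≥0∞) ^ n) h2n
    rwa [tildeP, smul_smul, ENNReal.mul_inv_cancel (by positivity) h2n, one_smul] at this
  have hle : prodPart n P S ≤ ∑ T : Finset (Fin n), prodPart n P T := by
    rw [← Finset.add_sum_erase _ _ (Finset.mem_univ S)]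
    exact Measure.le_add_right le_rfl
  have hS : MemLp f 2 (prodPart n P S) := hsum.mono_measure hle
  rw [prodPart] at hS
  have hcomp : MemLp (fun q : (Fin n → ℝ) × (Fin n → ℝ) => f (merge n S q.1 q.2)) 2
      (P.prod P) :=
    (memLp_map_measure_iff hS.aestronglyMeasurable
      (measurable_mergePair n S).aemeasurable).mp hS
  exact hcomp.integrable_sq.prod_right_ae

lemma measurable_finset_fiber {β γ : Type*} [MeasurableSpace β] [MeasurableSpace γ] {k : ℕ}
    (F : Finset (Fin k) → β → γ) (hF : ∀ S, Measurable (F S)) :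
    Measurable fun q : Finset (Fin k) × β => F q.1 q.2 := by
  have h1 : Measurable fun p : β × Finset (Fin k) => F p.2 p.1 :=
    measurable_from_prod_countable_left fun S => hF S
  exact h1.comp measurable_swap

/-- Consistency and error rate of the Monte Carlo estimator.
Let `f ∈ L¹(P̃_X)`, let the coefficients `w_i(S,N)` be nonnegative and sum to one over
`S ⊆ N∖{i}`, and let `(𝒮^(k), X^(k))`, `k ∈ ℕ`, be i.i.d. samples from `P_i^{(h)} ⊗ P_X`
defined on a probability space `(Ω, Pr)`. Then for `P_X`-almost every `x*`:
the Monte Carlo estimator `K⁻¹ ∑_{k<K} Δ_i(𝒮^(k), X^(k); x*, f)` is unbiased for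
`h_i[N, v^{ME}(·; x*, X, f)]`; the error converges to `0` in probability as `K → ∞`;
and if moreover `f ∈ L²(P̃_X)` then
`‖E_K‖²_{L²(Pr)} ≤ (4/K)·(max_{S⊆N∖{i}} w_i(S,N))·ν_{x*}^{(2)}(f)`. -/
theorem stmt7 (n : ℕ) (P : Measure (Fin n → ℝ)) [IsProbabilityMeasure P]
    (f : (Fin n → ℝ) → ℝ) (hf : MemLp f 1 (tildeP n P))
    (i : Fin n) (w : Finset (Fin n) → ℝ)
    (hw0 : ∀ S ∈ (univ.erase i).powerset, 0 ≤ w S)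
    (hw1 : ∑ S ∈ (univ.erase i).powerset, w S = 1)
    {Ω : Type} [MeasurableSpace Ω] (Pr : Measure Ω) [IsProbabilityMeasure Pr]
    (Z : ℕ → Ω → Finset (Fin n) × (Fin n → ℝ))
    (hZmeas : ∀ k, Measurable (Z k))
    (hlaw : ∀ k, Measure.map (Z k) Pr = (subsetMeasure n (univ.erase i) w).prod P)
    (hindep : iIndepFun Z Pr) :
    ∀ᵐ xs ∂P,
      (∀ K : ℕ, 0 < K →
        ∫ ω, (K : ℝ)⁻¹ * ∑ k ∈ Finset.range K, deltaFun n f i xs (Z k ω) ∂Pr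
          = gameValue n w i (vME n P f xs)) ∧
      TendstoInMeasure Pr
        (fun (K : ℕ) (ω : Ω) => (K : ℝ)⁻¹ * ∑ k ∈ Finset.range K, deltaFun n f i xs (Z k ω)
          - gameValue n w i (vME n P f xs)) atTop (fun _ => 0) ∧
      (MemLp f 2 (tildeP n P) →
        ∀ K : ℕ, 0 < K →
          ∫ ω, ((K : ℝ)⁻¹ * ∑ k ∈ Finset.range K, deltaFun n f i xs (Z k ω)
              - gameValue n w i (vME n P f xs)) ^ 2 ∂Pr
            ≤ (4 / K) *
                ((univ.erase i).powerset.sup' ⟨∅, Finset.empty_mem_powerset _⟩ w) *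
                ∑ S : Finset (Fin n), ∫ x, |f (merge n S xs x)| ^ 2 ∂P) := by
  classical
  have hprod : (subsetMeasure n (univ.erase i) w).prod P
      = ∑ T ∈ (univ.erase i).powerset, ENNReal.ofReal (w T) • P.map (Prod.mk T) :=
    subsetMeasure_prod n (univ.erase i) w P
  have hae1 : ∀ᵐ xs ∂P, ∀ S : Finset (Fin n), Integrable (fun x => f (merge n S xs x)) P :=
    ae_all_iff.mpr fun S => slice_int n P f hf S
  have hae2 : ∀ᵐ xs ∂P, MemLp f 2 (tildeP n P) →
      ∀ S : Finset (Fin n), Integrable (fun x => (f (merge n S xs x)) ^ 2) P := by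
    by_cases hf2 : MemLp f 2 (tildeP n P)
    · filter_upwards [ae_all_iff.mpr fun S => slice_sq_int n P f hf2 S] with xs h _
      exact h
    · exact ae_of_all _ fun xs h2 => absurd h2 hf2
  filter_upwards [hae1, hae2] with xs H1 H2full
  set gv := gameValue n w i (vME n P f xs) with hgv
  -- measurable versions of the slices
  obtain ⟨F, hFmeas, hFe⟩ : ∃ F : Finset (Fin n) → (Fin n → ℝ) → ℝ,
      (∀ S, Measurable (F S)) ∧
        ∀ S, (fun x => f (merge n S xs x)) =ᵐ[P] F S :=
    ⟨fun S => ((H1 S).1.mk _), fun S => (H1 S).1.stronglyMeasurable_mk.measurable,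
      fun S => (H1 S).1.ae_eq_mk⟩
  have hFint : ∀ S, Integrable (F S) P := fun S => (H1 S).congr (hFe S)
  set G : Finset (Fin n) × (Fin n → ℝ) → ℝ := fun q => F (insert i q.1) q.2 - F q.1 q.2
    with hGdef
  have hGmeas : Measurable G :=
    (measurable_finset_fiber (fun S => F (insert i S)) fun S => hFmeas _).sub
      (measurable_finset_fiber F hFmeas)
  have hGae : deltaFun n f i xs =ᵐ[(subsetMeasure n (univ.erase i) w).prod P] G := by
    rw [hprod]
    apply ae_finsetSum
    intro T hT
    apply Measure.ae_smul_measure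
    apply ae_map_prod_mk
    filter_upwards [hFe (insert i T), hFe T] with x h1 h2
    exact congrArg₂ (fun a b => a - b) h1 h2
  have hGT : ∀ T : Finset (Fin n), Integrable (fun x => G (T, x)) P := fun T =>
    (hFint (insert i T)).sub (hFint T)
  have hGintT : ∀ T ∈ (univ.erase i).powerset,
      Integrable G (ENNReal.ofReal (w T) • P.map (Prod.mk T)) := by
    intro T hT
    rcases eq_or_lt_of_le (hw0 T hT) with h0 | h0
    · rw [← h0, ENNReal.ofReal_zero, zero_smul]
      exact integrable_zero_measure
    · refine (integrable_smul_measure (by simpa [ENNReal.ofReal_eq_zero] using not_le.mpr h0)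
        ENNReal.ofReal_ne_top).mpr ?_
      exact (integrable_map_measure hGmeas.aestronglyMeasurable
        measurable_prodMk_left.aemeasurable).mpr (hGT T)
  have hGint : Integrable G ((subsetMeasure n (univ.erase i) w).prod P) := by
    rw [hprod]
    exact integrable_finset_sum_measure.mpr hGintT
  have hvme : ∀ T : Finset (Fin n), ∫ x, G (T, x) ∂P
      = vME n P f xs (insert i T) - vME n P f xs T := by
    intro T
    have h : ∫ x, G (T, x) ∂P = ∫ x, F (insert i T) x ∂P - ∫ x, F T x ∂P :=
      integral_sub (hFint (insert i T)) (hFint T)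
    rw [h, integral_congr_ae (hFe (insert i T)).symm, integral_congr_ae (hFe T).symm]
    rfl
  have hGint_eq : ∫ q, G q ∂((subsetMeasure n (univ.erase i) w).prod P) = gv := by
    rw [hprod, integral_finset_sum_measure hGintT, hgv]
    simp only [gameValue]
    refine Finset.sum_congr rfl fun T hT => ?_
    rw [integral_smul_measure, ENNReal.toReal_ofReal (hw0 T hT),
      integral_map measurable_prodMk_left.aemeasurable hGmeas.aestronglyMeasurable,
      hvme T, smul_eq_mul]
  have hXae : ∀ᵐ ω ∂Pr, ∀ k, deltaFun n f i xs (Z k ω) = G (Z k ω) := by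
    rw [ae_all_iff]
    intro k
    exact ae_of_ae_map (p := fun q => deltaFun n f i xs q = G q) (hZmeas k).aemeasurable
      (by rw [hlaw k]; exact hGae)
  have hXint : ∀ k, Integrable (fun ω => G (Z k ω)) Pr := fun k =>
    (integrable_map_measure hGmeas.aestronglyMeasurable (hZmeas k).aemeasurable).mp
      (by rw [hlaw k]; exact hGint)
  have hXexp : ∀ k, ∫ ω, G (Z k ω) ∂Pr = gv := fun k => by
    rw [← integral_map (hZmeas k).aemeasurable hGmeas.aestronglyMeasurable, hlaw k, hGint_eq]
  have hGunbiased : ∀ K : ℕ, 0 < K →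
      ∫ ω, (K : ℝ)⁻¹ * ∑ k ∈ Finset.range K, G (Z k ω) ∂Pr = gv := by
    intro K hK
    rw [integral_const_mul, integral_finset_sum _ fun k _ => hXint k]
    simp only [hXexp]
    rw [Finset.sum_const, Finset.card_range, nsmul_eq_mul]
    exact inv_mul_cancel_left₀ (Nat.cast_ne_zero.mpr hK.ne') _
  refine ⟨fun K hK => ?_, ?_, fun hf2 K hK => ?_⟩
  · have hcongr : ∫ ω, (K : ℝ)⁻¹ * ∑ k ∈ Finset.range K, deltaFun n f i xs (Z k ω) ∂Pr
        = ∫ ω, (K : ℝ)⁻¹ * ∑ k ∈ Finset.range K, G (Z k ω) ∂Pr := by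
      apply integral_congr_ae
      filter_upwards [hXae] with ω hω
      simp only [hω]
    rw [hcongr]
    exact hGunbiased K hK
  · have hpair : Pairwise (Function.onFun (fun u v => IndepFun u v Pr) fun k ω => G (Z k ω)) :=
      fun j k hjk => (hindep.indepFun hjk).comp hGmeas hGmeas
    have hident : ∀ k, IdentDistrib (fun ω => G (Z k ω)) (fun ω => G (Z 0 ω)) Pr Pr := fun k =>
      ⟨(hGmeas.comp (hZmeas k)).aemeasurable, (hGmeas.comp (hZmeas 0)).aemeasurable, by
        show Measure.map (G ∘ Z k) Pr = Measure.map (G ∘ Z 0) Pr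
        rw [← Measure.map_map hGmeas (hZmeas k), ← Measure.map_map hGmeas (hZmeas 0),
          hlaw k, hlaw 0]⟩
    have hslln := strong_law_ae_real (fun k ω => G (Z k ω)) (hXint 0) hpair hident
    apply tendstoInMeasure_of_tendsto_ae
    · intro K
      have hmeas : Measurable fun ω => (K : ℝ)⁻¹ * ∑ k ∈ Finset.range K, G (Z k ω) - gv :=
        (measurable_const.mul (Finset.measurable_sum _ fun k _ => hGmeas.comp (hZmeas k))).sub
          measurable_const
      refine hmeas.aestronglyMeasurable.congr ?_
      filter_upwards [hXae] with ω hω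
      simp only [hω]
    · filter_upwards [hslln, hXae] with ω hω hωeq
      have hrew : (fun K : ℕ => (K : ℝ)⁻¹ * ∑ k ∈ Finset.range K, deltaFun n f i xs (Z k ω)
          - gv)
          = fun K : ℕ => (∑ k ∈ Finset.range K, G (Z k ω)) / (K : ℝ) - gv := by
        funext K
        simp only [hωeq]
        rw [div_eq_inv_mul]
      rw [hrew]
      simpa [hXexp 0, sub_self] using hω.sub_const gv
  · have H2 : ∀ S : Finset (Fin n), Integrable (fun x => (f (merge n S xs x)) ^ 2) P :=
      H2full hf2
    have hFsq : ∀ S, Integrable (fun x => (F S x) ^ 2) P := fun S =>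
      (H2 S).congr (by filter_upwards [hFe S] with x h; exact congrArg (fun t => t ^ 2) h)
    have hGsqT : ∀ T : Finset (Fin n), Integrable (fun x => (G (T, x)) ^ 2) P := by
      intro T
      refine Integrable.mono' (((hFsq (insert i T)).const_mul 2).add ((hFsq T).const_mul 2))
        ((hGmeas.comp measurable_prodMk_left).pow_const 2).aestronglyMeasurable
        (ae_of_all _ fun x => ?_)
      have hGx : G (T, x) = F (insert i T) x - F T x := rfl
      rw [Real.norm_eq_abs, abs_of_nonneg (sq_nonneg _), hGx]
      simp only [Pi.add_apply]
      nlinarith [sq_nonneg (F (insert i T) x + F T x)]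
    have hGsqintT : ∀ T ∈ (univ.erase i).powerset,
        Integrable (fun q => (G q) ^ 2) (ENNReal.ofReal (w T) • P.map (Prod.mk T)) := by
      intro T hT
      rcases eq_or_lt_of_le (hw0 T hT) with h0 | h0
      · rw [← h0, ENNReal.ofReal_zero, zero_smul]; exact integrable_zero_measure
      · refine (integrable_smul_measure (by simpa [ENNReal.ofReal_eq_zero] using not_le.mpr h0)
          ENNReal.ofReal_ne_top).mpr ?_
        exact (integrable_map_measure (hGmeas.pow_const 2).aestronglyMeasurable
          measurable_prodMk_left.aemeasurable).mpr (hGsqT T)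
    have hGsq_int : Integrable (fun q => (G q) ^ 2)
        ((subsetMeasure n (univ.erase i) w).prod P) := by
      rw [hprod]
      exact integrable_finset_sum_measure.mpr hGsqintT
    have hGL2 : MemLp G 2 ((subsetMeasure n (univ.erase i) w).prod P) :=
      (memLp_two_iff_integrable_sq hGmeas.aestronglyMeasurable).mpr hGsq_int
    have hM : ∀ k, MemLp (fun ω => G (Z k ω)) 2 Pr := fun k =>
      (memLp_map_measure_iff hGmeas.aestronglyMeasurable (hZmeas k).aemeasurable).mp
        (by rw [hlaw k]; exact hGL2)
    set V := ∫ q, (G q) ^ 2 ∂((subsetMeasure n (univ.erase i) w).prod P) with hVdef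
    have hXsq : ∀ k, ∫ ω, (G (Z k ω)) ^ 2 ∂Pr = V := fun k => by
      rw [hVdef, ← hlaw k]
      exact (integral_map (hZmeas k).aemeasurable
        (hGmeas.pow_const 2).aestronglyMeasurable).symm
    have hK0 : (K : ℝ) ≠ 0 := Nat.cast_ne_zero.mpr hK.ne'
    set Xf : ℕ → Ω → ℝ := fun k ω => G (Z k ω) with hXf
    set Ssum : Ω → ℝ := ∑ k ∈ Finset.range K, Xf k with hSsum
    have hSsum_apply : ∀ ω, Ssum ω = ∑ k ∈ Finset.range K, G (Z k ω) := fun ω => by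
      rw [hSsum, Finset.sum_apply]
    have hSsumL2 : MemLp Ssum 2 Pr := memLp_finset_sum' _ fun k _ => hM k
    have hWL2 : MemLp (fun ω => (K : ℝ)⁻¹ * Ssum ω) 2 Pr := hSsumL2.const_mul _
    have hWexp : ∫ ω, (K : ℝ)⁻¹ * Ssum ω ∂Pr = gv := by
      rw [← hGunbiased K hK]
      apply integral_congr_ae
      apply ae_of_all
      intro ω
      simp only [hSsum_apply]
    have hvar_eq : ∫ ω, ((K : ℝ)⁻¹ * Ssum ω - gv) ^ 2 ∂Pr
        = variance (fun ω => (K : ℝ)⁻¹ * Ssum ω) Pr := by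
      rw [variance_eq_integral hWL2.1.aemeasurable, hWexp]
    have hsum_var : variance Ssum Pr ≤ (K : ℝ) * V := by
      rw [hSsum, IndepFun.variance_sum (fun k _ => hM k)
        (fun j hj k hk hjk => (hindep.indepFun hjk).comp hGmeas hGmeas)]
      calc ∑ k ∈ Finset.range K, variance (Xf k) Pr
          ≤ ∑ _k ∈ Finset.range K, V := Finset.sum_le_sum fun k _ =>
            (variance_le_expectation_sq (hM k).1).trans_eq (hXsq k)
        _ = (K : ℝ) * V := by rw [Finset.sum_const, Finset.card_range, nsmul_eq_mul]
    have hvar_le : variance (fun ω => (K : ℝ)⁻¹ * Ssum ω) Pr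
        ≤ ((K : ℝ)⁻¹) ^ 2 * ((K : ℝ) * V) := by
      rw [variance_const_mul]
      exact mul_le_mul_of_nonneg_left hsum_var (by positivity)
    -- bound V
    have hslice_nonneg : ∀ S : Finset (Fin n), 0 ≤ ∫ x, (f (merge n S xs x)) ^ 2 ∂P :=
      fun S => integral_nonneg fun x => sq_nonneg _
    have hwmax0 : 0 ≤ (univ.erase i).powerset.sup' ⟨∅, Finset.empty_mem_powerset _⟩ w :=
      le_trans (hw0 ∅ (Finset.empty_mem_powerset _))
        (Finset.le_sup' w (Finset.empty_mem_powerset _))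
    have hFslice : ∀ S, ∫ x, (F S x) ^ 2 ∂P = ∫ x, (f (merge n S xs x)) ^ 2 ∂P := fun S =>
      integral_congr_ae (by
        filter_upwards [hFe S] with x h
        exact (congrArg (fun t => t ^ 2) h).symm)
    have hVsum : V = ∑ T ∈ (univ.erase i).powerset, w T * ∫ x, (G (T, x)) ^ 2 ∂P := by
      rw [hVdef, hprod, integral_finset_sum_measure hGsqintT]
      refine Finset.sum_congr rfl fun T hT => ?_
      rw [integral_smul_measure, ENNReal.toReal_ofReal (hw0 T hT),
        integral_map measurable_prodMk_left.aemeasurable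
          (hGmeas.pow_const 2).aestronglyMeasurable, smul_eq_mul]
    have hterm : ∀ T ∈ (univ.erase i).powerset,
        w T * ∫ x, (G (T, x)) ^ 2 ∂P
          ≤ ((univ.erase i).powerset.sup' ⟨∅, Finset.empty_mem_powerset _⟩ w) *
            (2 * ∫ x, (f (merge n (insert i T) xs x)) ^ 2 ∂P
              + 2 * ∫ x, (f (merge n T xs x)) ^ 2 ∂P) := by
      intro T hT
      have hb : ∫ x, (G (T, x)) ^ 2 ∂P
          ≤ ∫ x, (2 * (F (insert i T) x) ^ 2 + 2 * (F T x) ^ 2) ∂P := by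
        apply integral_mono (hGsqT T)
          (((hFsq (insert i T)).const_mul 2).add ((hFsq T).const_mul 2))
        intro x
        have hGx : G (T, x) = F (insert i T) x - F T x := rfl
        simp only [hGx, Pi.add_apply]
        nlinarith [sq_nonneg (F (insert i T) x + F T x)]
      have h1 : ∫ x, (G (T, x)) ^ 2 ∂P
          ≤ 2 * ∫ x, (f (merge n (insert i T) xs x)) ^ 2 ∂P
            + 2 * ∫ x, (f (merge n T xs x)) ^ 2 ∂P := by
        refine hb.trans_eq ?_
        rw [integral_add ((hFsq (insert i T)).const_mul 2) ((hFsq T).const_mul 2),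
          integral_const_mul, integral_const_mul, hFslice, hFslice]
      exact mul_le_mul (Finset.le_sup' w hT) h1
        (integral_nonneg fun x => sq_nonneg _)
        hwmax0
    have ha : ∑ T ∈ (univ.erase i).powerset, ∫ x, (f (merge n (insert i T) xs x)) ^ 2 ∂P
        ≤ ∑ S : Finset (Fin n), ∫ x, (f (merge n S xs x)) ^ 2 ∂P := by
      have hinj : ∀ T₁ ∈ (univ.erase i).powerset, ∀ T₂ ∈ (univ.erase i).powerset,
          insert i T₁ = insert i T₂ → T₁ = T₂ := by
        intro T₁ h₁ T₂ h₂ heq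
        have hi₁ : i ∉ T₁ := fun hmem =>
          (Finset.mem_erase.mp ((Finset.mem_powerset.mp h₁) hmem)).1 rfl
        have hi₂ : i ∉ T₂ := fun hmem =>
          (Finset.mem_erase.mp ((Finset.mem_powerset.mp h₂) hmem)).1 rfl
        rw [← Finset.erase_insert hi₁, ← Finset.erase_insert hi₂, heq]
      have himg : ∑ S ∈ (univ.erase i).powerset.image (fun T => insert i T),
          ∫ x, (f (merge n S xs x)) ^ 2 ∂P
            = ∑ T ∈ (univ.erase i).powerset, ∫ x, (f (merge n (insert i T) xs x)) ^ 2 ∂P :=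
        Finset.sum_image hinj
      rw [← himg]
      exact Finset.sum_le_sum_of_subset_of_nonneg (Finset.subset_univ _)
        (fun S _ _ => hslice_nonneg S)
    have hbsum : ∑ T ∈ (univ.erase i).powerset, ∫ x, (f (merge n T xs x)) ^ 2 ∂P
        ≤ ∑ S : Finset (Fin n), ∫ x, (f (merge n S xs x)) ^ 2 ∂P :=
      Finset.sum_le_sum_of_subset_of_nonneg (Finset.subset_univ _)
        (fun S _ _ => hslice_nonneg S)
    have hVle : V ≤ 4 * ((univ.erase i).powerset.sup' ⟨∅, Finset.empty_mem_powerset _⟩ w)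
        * ∑ S : Finset (Fin n), ∫ x, (f (merge n S xs x)) ^ 2 ∂P := by
      calc V = ∑ T ∈ (univ.erase i).powerset, w T * ∫ x, (G (T, x)) ^ 2 ∂P := hVsum
        _ ≤ ∑ T ∈ (univ.erase i).powerset,
            ((univ.erase i).powerset.sup' ⟨∅, Finset.empty_mem_powerset _⟩ w) *
              (2 * ∫ x, (f (merge n (insert i T) xs x)) ^ 2 ∂P
                + 2 * ∫ x, (f (merge n T xs x)) ^ 2 ∂P) := Finset.sum_le_sum hterm
        _ = 2 * ((univ.erase i).powerset.sup' ⟨∅, Finset.empty_mem_powerset _⟩ w) *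
            ((∑ T ∈ (univ.erase i).powerset, ∫ x, (f (merge n (insert i T) xs x)) ^ 2 ∂P)
              + ∑ T ∈ (univ.erase i).powerset, ∫ x, (f (merge n T xs x)) ^ 2 ∂P) := by
          rw [← Finset.mul_sum, Finset.sum_add_distrib, ← Finset.mul_sum, ← Finset.mul_sum]
          ring
        _ ≤ 2 * ((univ.erase i).powerset.sup' ⟨∅, Finset.empty_mem_powerset _⟩ w) *
            ((∑ S : Finset (Fin n), ∫ x, (f (merge n S xs x)) ^ 2 ∂P)
              + ∑ S : Finset (Fin n), ∫ x, (f (merge n S xs x)) ^ 2 ∂P) :=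
          mul_le_mul_of_nonneg_left (add_le_add ha hbsum) (by linarith)
        _ = 4 * ((univ.erase i).powerset.sup' ⟨∅, Finset.empty_mem_powerset _⟩ w)
            * ∑ S : Finset (Fin n), ∫ x, (f (merge n S xs x)) ^ 2 ∂P := by ring
    have hνeq : (∑ S : Finset (Fin n), ∫ x, |f (merge n S xs x)| ^ 2 ∂P)
        = ∑ S : Finset (Fin n), ∫ x, (f (merge n S xs x)) ^ 2 ∂P :=
      Finset.sum_congr rfl fun S _ => by
        congr 1
        funext x
        rw [sq_abs]
    calc ∫ ω, ((K : ℝ)⁻¹ * ∑ k ∈ Finset.range K, deltaFun n f i xs (Z k ω) - gv) ^ 2 ∂Pr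
        = ∫ ω, ((K : ℝ)⁻¹ * Ssum ω - gv) ^ 2 ∂Pr := by
          apply integral_congr_ae
          filter_upwards [hXae] with ω hω
          simp only [hSsum_apply, hω]
      _ = variance (fun ω => (K : ℝ)⁻¹ * Ssum ω) Pr := hvar_eq
      _ ≤ ((K : ℝ)⁻¹) ^ 2 * ((K : ℝ) * V) := hvar_le
      _ = V / K := by field_simp
      _ ≤ (4 * ((univ.erase i).powerset.sup' ⟨∅, Finset.empty_mem_powerset _⟩ w)
          * ∑ S : Finset (Fin n), ∫ x, (f (merge n S xs x)) ^ 2 ∂P) / K := by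
          exact (div_le_div_iff_of_pos_right (Nat.cast_pos.mpr hK)).mpr hVle
      _ = (4 / K) * ((univ.erase i).powerset.sup' ⟨∅, Finset.empty_mem_powerset _⟩ w)
          * ∑ S : Finset (Fin n), ∫ x, |f (merge n S xs x)| ^ 2 ∂P := by
          rw [hνeq]; ring
end
end
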